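/- Let (V,d,b) be an acyclic information network, let A, Â ⊆ V\{d} be disjoint transient and permanent initial sets, let v be a non-void node and 1 ≤ t ≤ T. Then E[X^t_v(A,Â)] = ∑_{u ∈ A ∪ Â} (M_Â^t) v u, where M_Â is the absorbing modification of b; equivalently, the probability that v is active at time t equals the probability that a random walk with transition matrix b started at v either visits Â at some time ≤ t, or is in A at time t. -/

import Mathlib

open MeasureTheory

/-- An information network: a finite node set `V` with a distinguished void node `d`
and a row-stochastic weight matrix `b` with entries in `[0,1]` and `b d d = 1`. -/
structure InfoNetwork (V : Type*) [Fintype V] where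
  d : V
  b : V → V → ℝ
  b_nonneg : ∀ v u, 0 ≤ b v u
  b_le_one : ∀ v u, b v u ≤ 1
  row_sum : ∀ v, ∑ u, b v u = 1
  void_loop : b d d = 1

/-- The uniform probability measure on the interval `(0,1)`. -/
noncomputable def unifMeasure : Measure ℝ := volume.restrict (Set.Ioo (0:ℝ) 1)

/-- Product over `V` of uniform measures on `(0,1)`: the distribution of the thresholds. -/
noncomputable def thresholdMeasure (V : Type*) [Fintype V] : Measure (V → ℝ) :=
  Measure.pi fun _ : V => unifMeasure

namespace InfoNetwork

variable {V : Type*} [Fintype V]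

/-- The set of active nodes at time `t` under the non-progressive linear threshold model,
with transient initial set `A`, permanent initial set `Ahat` and thresholds `θ`. -/
noncomputable def activeSet (N : InfoNetwork V) (A Ahat : Set V) (θ : V → ℝ) : ℕ → Set V
  | 0 => A ∪ Ahat
  | t+1 => Ahat ∪
      {v | v ∉ Ahat ∧ θ v ≤ ∑ u, (N.activeSet A Ahat θ t).indicator (N.b v) u}

/-- `E[X^t_v(A,Ahat)]`: the probability (over the random thresholds) that `v` is active
at time `t`. -/
noncomputable def EX (N : InfoNetwork V) (A Ahat : Set V) (t : ℕ) (v : V) : ℝ :=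
  (thresholdMeasure V {θ | v ∈ N.activeSet A Ahat θ t}).toReal

/-- The expected influence over the period `[1,T]`. -/
noncomputable def sigmaBar (N : InfoNetwork V) (T : ℕ) (A Ahat : Set V) : ℝ :=
  (1 / (T : ℝ)) * ∑ t ∈ Finset.Icc 1 T, ∑ v, N.EX A Ahat t v

/-- The edge relation of the directed graph on `V \ {d}`. -/
def edgeRel (N : InfoNetwork V) (v u : V) : Prop :=
  v ≠ N.d ∧ u ≠ N.d ∧ 0 < N.b v u

/-- The network is acyclic if the directed graph on `V \ {d}` has no directed cycle. -/
def Acyclic (N : InfoNetwork V) : Prop :=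
  ∀ v, ¬ Relation.TransGen N.edgeRel v v

end InfoNetwork

/-- A real-valued set function `f` is submodular on the ground set `S`. -/
def SubmodularOn {V : Type*} (S : Set V) (f : Set V → ℝ) : Prop :=
  ∀ A B : Set V, A ⊆ B → B ⊆ S → ∀ w ∈ S, w ∉ B →
    f (insert w B) - f B ≤ f (insert w A) - f A

open scoped Classical in
/-- The absorbing modification `M_Â` of `b`: row `v` equals row `v` of `b` when `v ∉ Ahat`
and equals the standard basis row `e_v` when `v ∈ Ahat`. -/
noncomputable def absorbing {V : Type*} [Fintype V] [DecidableEq V] (N : InfoNetwork V)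
    (Ahat : Set V) : Matrix V V ℝ :=
  Matrix.of fun v u => if v ∈ Ahat then (if u = v then 1 else 0) else N.b v u


section AuxProof

open MeasureTheory InfoNetwork

instance : IsProbabilityMeasure unifMeasure := by
  constructor
  rw [unifMeasure, Measure.restrict_apply_univ, Real.volume_Ioo]
  norm_num

instance (V : Type*) [Fintype V] : IsProbabilityMeasure (thresholdMeasure V) := by
  unfold thresholdMeasure; infer_instance

lemma unifMeasure_Iic {s : ℝ} (h0 : 0 ≤ s) (h1 : s ≤ 1) :
    unifMeasure (Set.Iic s) = ENNReal.ofReal s := by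
  rw [unifMeasure, Measure.restrict_apply measurableSet_Iic]
  apply le_antisymm
  · calc volume (Set.Iic s ∩ Set.Ioo 0 1) ≤ volume (Set.Ioc 0 s) := by
          apply measure_mono; rintro x ⟨hx1, hx2, hx3⟩; exact ⟨hx2, hx1⟩
      _ = ENNReal.ofReal s := by rw [Real.volume_Ioc, sub_zero]
  · calc ENNReal.ofReal s = volume (Set.Ioo 0 s) := by rw [Real.volume_Ioo, sub_zero]
      _ ≤ volume (Set.Iic s ∩ Set.Ioo 0 1) := by
          apply measure_mono; rintro x ⟨hx1, hx2⟩
          exact ⟨le_of_lt hx2, hx1, lt_of_lt_of_le hx2 h1⟩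

variable {V : Type*} [Fintype V]

lemma InfoNetwork.b_d_eq_zero [DecidableEq V] (N : InfoNetwork V) {x : V} (hx : x ≠ N.d) :
    N.b N.d x = 0 := by
  have h := N.row_sum N.d
  rw [← Finset.add_sum_erase _ _ (Finset.mem_univ N.d), N.void_loop] at h
  have hsum : ∑ y ∈ Finset.univ.erase N.d, N.b N.d y = 0 := by linarith
  exact (Finset.sum_eq_zero_iff_of_nonneg (fun y _ => N.b_nonneg N.d y)).mp hsum x
    (Finset.mem_erase.mpr ⟨hx, Finset.mem_univ x⟩)

lemma InfoNetwork.reach_from_d [DecidableEq V] (N : InfoNetwork V) {w : V}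
    (h : Relation.ReflTransGen (fun a c => 0 < N.b a c) N.d w) : w = N.d := by
  induction h with
  | refl => rfl
  | tail _ step ih =>
    subst ih
    by_contra hc
    rw [N.b_d_eq_zero hc] at step
    exact lt_irrefl 0 step

lemma InfoNetwork.reach_edgeRel [DecidableEq V] (N : InfoNetwork V) {u w : V}
    (hu : u ≠ N.d) (hw : w ≠ N.d)
    (h : Relation.ReflTransGen (fun a c => 0 < N.b a c) u w) :
    Relation.ReflTransGen N.edgeRel u w := by
  induction h with
  | refl => exact Relation.ReflTransGen.refl
  | @tail b c hb step ih =>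
    have hbne : b ≠ N.d := by
      rintro rfl
      exact hw (by
        by_contra hc
        rw [N.b_d_eq_zero hc] at step
        exact lt_irrefl 0 step)
    exact Relation.ReflTransGen.tail (ih hbne) ⟨hbne, hw, step⟩

/-- In an acyclic network, nothing reachable from an out-neighbour of `v ≠ d` equals `v`. -/
lemma InfoNetwork.not_reach_back [DecidableEq V] (N : InfoNetwork V) (hacyc : N.Acyclic)
    {v u : V} (hv : v ≠ N.d) (hvu : 0 < N.b v u) {w : V}
    (hw : Relation.ReflTransGen (fun a c => 0 < N.b a c) u w) : w ≠ v := by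
  rintro rfl
  have hu : u ≠ N.d := by
    rintro rfl
    exact hv (N.reach_from_d hw)
  exact hacyc w (Relation.TransGen.head' ⟨hv, hu, hvu⟩ (N.reach_edgeRel hu hv hw))

/-- membership in the active set only depends on thresholds of reachable nodes. -/
lemma InfoNetwork.activeSet_local (N : InfoNetwork V) (A Ahat : Set V) :
    ∀ (t : ℕ) (θ θ' : V → ℝ) (u : V),
      (∀ w, Relation.ReflTransGen (fun a c => 0 < N.b a c) u w → θ w = θ' w) →
      (u ∈ N.activeSet A Ahat θ t ↔ u ∈ N.activeSet A Ahat θ' t) := by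
  intro t
  induction t with
  | zero => intro θ θ' u _; exact Iff.rfl
  | succ t ih =>
    intro θ θ' u h
    simp only [activeSet, Set.mem_union, Set.mem_setOf_eq]
    have hsum : ∑ w, (N.activeSet A Ahat θ t).indicator (N.b u) w
        = ∑ w, (N.activeSet A Ahat θ' t).indicator (N.b u) w := by
      apply Finset.sum_congr rfl
      intro w _
      rcases lt_or_eq_of_le (N.b_nonneg u w) with hpos | hzero
      · have hmem := ih θ θ' w (fun z hz => h z (Relation.ReflTransGen.head hpos hz))
        by_cases hw : w ∈ N.activeSet A Ahat θ t
        · rw [Set.indicator_of_mem hw, Set.indicator_of_mem (hmem.mp hw)]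
        · rw [Set.indicator_of_notMem hw,
            Set.indicator_of_notMem (fun hc => hw (hmem.mpr hc))]
      · by_cases hw : w ∈ N.activeSet A Ahat θ t <;>
          by_cases hw' : w ∈ N.activeSet A Ahat θ' t <;>
          simp [Set.indicator_apply, hw, hw', ← hzero]
    rw [hsum, h u Relation.ReflTransGen.refl]

lemma InfoNetwork.measurableSet_active (N : InfoNetwork V) (A Ahat : Set V) :
    ∀ (t : ℕ) (u : V), MeasurableSet {θ : V → ℝ | u ∈ N.activeSet A Ahat θ t} := by
  intro t
  induction t with
  | zero =>
    intro u
    by_cases h : u ∈ A ∪ Ahat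
    · have : {θ : V → ℝ | u ∈ N.activeSet A Ahat θ 0} = Set.univ := by
        ext θ; simp [activeSet, h]
      rw [this]; exact MeasurableSet.univ
    · have : {θ : V → ℝ | u ∈ N.activeSet A Ahat θ 0} = ∅ := by
        ext θ
        simp only [activeSet, Set.mem_setOf_eq, Set.mem_empty_iff_false, iff_false]
        exact h
      rw [this]; exact MeasurableSet.empty
  | succ t ih =>
    intro u
    have hf : Measurable fun θ : V → ℝ =>
        ∑ w, (N.activeSet A Ahat θ t).indicator (N.b u) w := by
      apply Finset.measurable_sum
      intro w _
      have hrw : (fun θ : V → ℝ => (N.activeSet A Ahat θ t).indicator (N.b u) w)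
          = ({θ : V → ℝ | w ∈ N.activeSet A Ahat θ t}).indicator
              (fun _ => N.b u w) := by
        ext θ
        by_cases h : w ∈ N.activeSet A Ahat θ t <;>
          simp [Set.indicator_apply, h]
      rw [hrw]
      exact measurable_const.indicator (ih w)
    by_cases h : u ∈ Ahat
    · have : {θ : V → ℝ | u ∈ N.activeSet A Ahat θ (t + 1)} = Set.univ := by
        ext θ; simp [activeSet, h]
      rw [this]; exact MeasurableSet.univ
    · have : {θ : V → ℝ | u ∈ N.activeSet A Ahat θ (t + 1)} =
          {θ : V → ℝ | θ u ≤ ∑ w, (N.activeSet A Ahat θ t).indicator (N.b u) w} := by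
        ext θ; simp [activeSet, h]
      rw [this]
      exact measurableSet_le (measurable_pi_apply u) hf

lemma InfoNetwork.mem_activeSet_of_mem_Ahat (N : InfoNetwork V) (A Ahat : Set V)
    {v : V} (hv : v ∈ Ahat) (θ : V → ℝ) : ∀ t, v ∈ N.activeSet A Ahat θ t
  | 0 => Set.mem_union_right _ hv
  | (t+1) => Set.mem_union_left _ hv

/-- Key measure computation: the probability that `θ v ≤ S θ`, for `S` with values in `[0,1]`
not depending on coordinate `v`, equals the expectation of `S`. -/
lemma pi_measure_le_eq [DecidableEq V] (v : V) (S : (V → ℝ) → ℝ) (hS : Measurable S)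
    (h0 : ∀ θ, 0 ≤ S θ) (h1 : ∀ θ, S θ ≤ 1)
    (hind : ∀ θ x, S (Function.update θ v x) = S θ) :
    thresholdMeasure V {θ | θ v ≤ S θ} = ∫⁻ θ, ENNReal.ofReal (S θ) ∂(thresholdMeasure V) := by
  have hE : MeasurableSet {θ : V → ℝ | θ v ≤ S θ} :=
    measurableSet_le (measurable_pi_apply v) hS
  have hmeas1 : Measurable (({θ : V → ℝ | θ v ≤ S θ}).indicator (1 : (V → ℝ) → ENNReal)) :=
    measurable_const.indicator hE
  have hmeas2 : Measurable fun θ : V → ℝ => ENNReal.ofReal (S θ) :=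
    ENNReal.measurable_ofReal.comp hS
  rw [thresholdMeasure, ← lintegral_indicator_one hE,
    lintegral_eq_lmarginal_univ (fun _ => (0:ℝ)), lintegral_eq_lmarginal_univ (fun _ => (0:ℝ)),
    ← Finset.insert_erase (Finset.mem_univ v),
    lmarginal_insert' _ hmeas1 (Finset.notMem_erase v _),
    lmarginal_insert' _ hmeas2 (Finset.notMem_erase v _)]
  congr 1
  ext θ
  have hLHS : (fun x => ({θ : V → ℝ | θ v ≤ S θ}).indicator (1 : (V → ℝ) → ENNReal)
      (Function.update θ v x)) = (Set.Iic (S θ)).indicator (1 : ℝ → ENNReal) := by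
    ext x
    have hx : Function.update θ v x ∈ {θ : V → ℝ | θ v ≤ S θ} ↔ x ∈ Set.Iic (S θ) := by
      simp only [Set.mem_setOf_eq, Function.update_self, hind, Set.mem_Iic]
    by_cases h : x ∈ Set.Iic (S θ)
    · rw [Set.indicator_of_mem (hx.mpr h), Set.indicator_of_mem h]; rfl
    · rw [Set.indicator_of_notMem (fun hc => h (hx.mp hc)), Set.indicator_of_notMem h]
  rw [hLHS, lintegral_indicator_one measurableSet_Iic, unifMeasure_Iic (h0 θ) (h1 θ)]
  simp only [hind]
  rw [lintegral_const, measure_univ, mul_one]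

/-- Row `v` of any power of a matrix whose row `v` is the `v`-th standard basis vector. -/
lemma pow_row_fixed [DecidableEq V] (M : Matrix V V ℝ) (v : V)
    (hrow : ∀ w, M v w = if w = v then 1 else 0) :
    ∀ (t : ℕ) (u : V), (M ^ t) v u = if u = v then 1 else 0 := by
  intro t
  induction t with
  | zero =>
    intro u
    rw [pow_zero, Matrix.one_apply]
    by_cases h : u = v
    · rw [if_pos h, if_pos h.symm]
    · rw [if_neg h, if_neg (fun hc => h hc.symm)]
  | succ t ih =>
    intro u
    rw [pow_succ', Matrix.mul_apply]
    rw [Finset.sum_eq_single v]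
    · rw [hrow v, if_pos rfl, one_mul, ih u]
    · intro w _ hw
      rw [hrow w, if_neg hw, zero_mul]
    · intro h; exact absurd (Finset.mem_univ v) h

open scoped Classical in
lemma indicator_sum_row_fixed [DecidableEq V] (M : Matrix V V ℝ) (v : V) (S : Set V)
    (hrow : ∀ w, M v w = if w = v then 1 else 0) (t : ℕ) :
    ∑ u, S.indicator ((M ^ t) v) u = if v ∈ S then 1 else 0 := by
  classical
  rw [Finset.sum_eq_single v]
  · by_cases h : v ∈ S
    · rw [Set.indicator_of_mem h, pow_row_fixed M v hrow t v, if_pos rfl, if_pos h]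
    · rw [Set.indicator_of_notMem h, if_neg h]
  · intro u _ hu
    by_cases h : u ∈ S
    · rw [Set.indicator_of_mem h, pow_row_fixed M v hrow t u, if_neg hu]
    · rw [Set.indicator_of_notMem h]
  · intro h; exact absurd (Finset.mem_univ v) h

lemma indicator_sum_pow_succ [DecidableEq V] (M : Matrix V V ℝ) (S : Set V) (t : ℕ) (v : V) :
    ∑ w, S.indicator ((M ^ (t+1)) v) w = ∑ u, M v u * ∑ w, S.indicator ((M ^ t) u) w := by
  calc ∑ w, S.indicator ((M ^ (t+1)) v) w
      = ∑ w, ∑ u, M v u * S.indicator ((M ^ t) u) w := by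
        apply Finset.sum_congr rfl
        intro w _
        by_cases hw : w ∈ S
        · simp only [Set.indicator_of_mem hw, pow_succ', Matrix.mul_apply]
        · simp [Set.indicator_of_notMem hw]
    _ = ∑ u, M v u * ∑ w, S.indicator ((M ^ t) u) w := by
        rw [Finset.sum_comm]
        exact Finset.sum_congr rfl fun u _ => (Finset.mul_sum _ _ _).symm

end AuxProof

section MainProof

open MeasureTheory InfoNetwork

variable {V : Type*} [Fintype V] [DecidableEq V]

/-- Recursion formula: for a non-void node outside `Ahat`, the activation probability at time
`t+1` is the `b`-weighted average of activation probabilities at time `t`. -/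
lemma InfoNetwork.EX_succ (N : InfoNetwork V) (hacyc : N.Acyclic) (A Ahat : Set V)
    {v : V} (hv : v ≠ N.d) (hvA : v ∉ Ahat) (t : ℕ) :
    N.EX A Ahat (t+1) v = ∑ u, N.b v u * N.EX A Ahat t u := by
  set S : (V → ℝ) → ℝ := fun θ => ∑ u, (N.activeSet A Ahat θ t).indicator (N.b v) u with hSdef
  have hSmeas : Measurable S := by
    apply Finset.measurable_sum
    intro w _
    have hrw : (fun θ : V → ℝ => (N.activeSet A Ahat θ t).indicator (N.b v) w)
        = ({θ : V → ℝ | w ∈ N.activeSet A Ahat θ t}).indicator (fun _ => N.b v w) := by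
      ext θ
      by_cases h : w ∈ N.activeSet A Ahat θ t <;> simp [Set.indicator_apply, h]
    exact hrw ▸ measurable_const.indicator (N.measurableSet_active A Ahat t w)
  have h0 : ∀ θ, 0 ≤ S θ :=
    fun θ => Finset.sum_nonneg fun u _ =>
      Set.indicator_nonneg (fun x _ => N.b_nonneg v x) u
  have h1 : ∀ θ, S θ ≤ 1 := by
    intro θ
    calc S θ ≤ ∑ u, N.b v u := by
          apply Finset.sum_le_sum
          intro u _
          by_cases h : u ∈ N.activeSet A Ahat θ t
          · rw [Set.indicator_of_mem h]
          · rw [Set.indicator_of_notMem h]; exact N.b_nonneg v u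
      _ = 1 := N.row_sum v
  have hind : ∀ θ x, S (Function.update θ v x) = S θ := by
    intro θ x
    apply Finset.sum_congr rfl
    intro u _
    rcases lt_or_eq_of_le (N.b_nonneg v u) with hpos | hzero
    · have hmem := N.activeSet_local A Ahat t (Function.update θ v x) θ u
        (fun w hw => Function.update_of_ne (N.not_reach_back hacyc hv hpos hw) x θ)
      by_cases h : u ∈ N.activeSet A Ahat (Function.update θ v x) t
      · rw [Set.indicator_of_mem h, Set.indicator_of_mem (hmem.mp h)]
      · rw [Set.indicator_of_notMem h,
          Set.indicator_of_notMem (fun hc => h (hmem.mpr hc))]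
    · by_cases h : u ∈ N.activeSet A Ahat (Function.update θ v x) t <;>
        by_cases h' : u ∈ N.activeSet A Ahat θ t <;>
        simp [Set.indicator_apply, h, h', ← hzero]
  have hset : {θ : V → ℝ | v ∈ N.activeSet A Ahat θ (t+1)} = {θ : V → ℝ | θ v ≤ S θ} := by
    ext θ; simp [activeSet, hvA, hSdef]
  have hint : thresholdMeasure V {θ : V → ℝ | θ v ≤ S θ}
      = ∑ u, ENNReal.ofReal (N.b v u) *
          thresholdMeasure V {θ : V → ℝ | u ∈ N.activeSet A Ahat θ t} := by
    rw [pi_measure_le_eq v S hSmeas h0 h1 hind]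
    have hofsum : ∀ θ : V → ℝ, ENNReal.ofReal (S θ)
        = ∑ u, ({θ : V → ℝ | u ∈ N.activeSet A Ahat θ t}).indicator
            (fun _ => ENNReal.ofReal (N.b v u)) θ := by
      intro θ
      rw [hSdef]
      rw [ENNReal.ofReal_sum_of_nonneg
        (fun u _ => Set.indicator_nonneg (fun x _ => N.b_nonneg v x) u)]
      apply Finset.sum_congr rfl
      intro u _
      by_cases h : u ∈ N.activeSet A Ahat θ t
      · rw [Set.indicator_of_mem h, Set.indicator_of_mem (by exact h)]
      · rw [Set.indicator_of_notMem h, Set.indicator_of_notMem (by exact h),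
          ENNReal.ofReal_zero]
    simp only [hofsum]
    rw [lintegral_finset_sum _ (fun u _ =>
      measurable_const.indicator (N.measurableSet_active A Ahat t u))]
    apply Finset.sum_congr rfl
    intro u _
    rw [lintegral_indicator (N.measurableSet_active A Ahat t u), setLIntegral_const]
  rw [InfoNetwork.EX, hset, hint, ENNReal.toReal_sum]
  · apply Finset.sum_congr rfl
    intro u _
    rw [ENNReal.toReal_mul, ENNReal.toReal_ofReal (N.b_nonneg v u)]
    rfl
  · intro u _
    exact ENNReal.mul_ne_top ENNReal.ofReal_ne_top (measure_ne_top _ _)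

theorem EX_eq_indicator_sum (N : InfoNetwork V) (hacyc : N.Acyclic) (A Ahat : Set V)
    (hA : A ⊆ {x : V | x ≠ N.d}) (hAhat : Ahat ⊆ {x : V | x ≠ N.d}) :
    ∀ (t : ℕ) (v : V),
      N.EX A Ahat t v = ∑ u : V, (A ∪ Ahat).indicator ((absorbing N Ahat ^ t) v) u := by
  classical
  have hdnotin : N.d ∉ A ∪ Ahat := by
    rintro (h | h)
    · exact hA h rfl
    · exact hAhat h rfl
  intro t
  induction t with
  | zero =>
    intro v
    rw [InfoNetwork.EX]
    have hrow : ∀ w : V, ((absorbing N Ahat ^ 0) v) w = if w = v then 1 else 0 := by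
      intro w; rw [pow_zero, Matrix.one_apply]
      by_cases h : w = v
      · rw [if_pos h, if_pos h.symm]
      · rw [if_neg h, if_neg (fun hc => h hc.symm)]
    have hRHS : ∑ u : V, (A ∪ Ahat).indicator ((absorbing N Ahat ^ 0) v) u
        = if v ∈ A ∪ Ahat then 1 else 0 := by
      rw [Finset.sum_eq_single v]
      · by_cases h : v ∈ A ∪ Ahat
        · rw [Set.indicator_of_mem h, hrow v, if_pos rfl, if_pos h]
        · rw [Set.indicator_of_notMem h, if_neg h]
      · intro u _ hu
        by_cases h : u ∈ A ∪ Ahat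
        · rw [Set.indicator_of_mem h, hrow u, if_neg hu]
        · rw [Set.indicator_of_notMem h]
      · intro h; exact absurd (Finset.mem_univ v) h
    rw [hRHS]
    by_cases h : v ∈ A ∪ Ahat
    · have : {θ : V → ℝ | v ∈ N.activeSet A Ahat θ 0} = Set.univ := by
        ext θ; simp [activeSet, h]
      rw [this, if_pos h, measure_univ, ENNReal.toReal_one]
    · have : {θ : V → ℝ | v ∈ N.activeSet A Ahat θ 0} = ∅ := by
        ext θ
        simp only [activeSet, Set.mem_setOf_eq, Set.mem_empty_iff_false, iff_false]
        exact h
      rw [this, if_neg h, measure_empty, ENNReal.toReal_zero]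
  | succ t ih =>
    intro v
    by_cases hvA : v ∈ Ahat
    · -- permanent nodes stay active, and their row of the matrix is a basis vector
      have hrow : ∀ w : V, absorbing N Ahat v w = if w = v then 1 else 0 := by
        intro w; simp [absorbing, hvA]
      rw [indicator_sum_row_fixed _ _ _ hrow, if_pos (Set.mem_union_right _ hvA)]
      rw [InfoNetwork.EX]
      have : {θ : V → ℝ | v ∈ N.activeSet A Ahat θ (t+1)} = Set.univ := by
        ext θ
        simp only [Set.mem_setOf_eq, Set.mem_univ, iff_true]
        exact N.mem_activeSet_of_mem_Ahat A Ahat hvA θ (t+1)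
      rw [this, measure_univ, ENNReal.toReal_one]
    · by_cases hvd : v = N.d
      · subst hvd
        -- the void node is (almost surely) never active
        have hdA : N.d ∉ Ahat := fun h => hAhat h rfl
        have hrow : ∀ w : V, absorbing N Ahat N.d w = if w = N.d then 1 else 0 := by
          intro w
          simp only [absorbing, Matrix.of_apply, if_neg hdA]
          by_cases h : w = N.d
          · rw [if_pos h, h, N.void_loop]
          · rw [if_neg h, N.b_d_eq_zero h]
        rw [indicator_sum_row_fixed _ _ _ hrow, if_neg hdnotin]
        have hEt : thresholdMeasure V {θ : V → ℝ | N.d ∈ N.activeSet A Ahat θ t} = 0 := by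
          have h0 := ih N.d
          rw [indicator_sum_row_fixed _ _ _ hrow, if_neg hdnotin, InfoNetwork.EX] at h0
          rcases (ENNReal.toReal_eq_zero_iff _).mp h0 with h | h
          · exact h
          · exact absurd h (measure_ne_top _ _)
        have hzero : thresholdMeasure V {θ : V → ℝ | θ N.d ≤ 0} = 0 := by
          have hsetpi : {θ : V → ℝ | θ N.d ≤ 0}
              = Set.pi Set.univ (fun j => if j = N.d then Set.Iic (0:ℝ) else Set.univ) := by
            ext θ
            simp only [Set.mem_setOf_eq, Set.mem_pi, Set.mem_univ, forall_true_left]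
            constructor
            · intro h j
              by_cases hj : j = N.d
              · subst hj; rw [if_pos rfl]; exact h
              · rw [if_neg hj]; trivial
            · intro h
              have h2 := h N.d
              rwa [if_pos rfl] at h2
          rw [hsetpi, thresholdMeasure, Measure.pi_pi]
          apply Finset.prod_eq_zero (Finset.mem_univ N.d)
          rw [if_pos rfl, unifMeasure, Measure.restrict_apply measurableSet_Iic]
          have hempty : Set.Iic (0:ℝ) ∩ Set.Ioo 0 1 = ∅ := by
            ext x
            simp only [Set.mem_inter_iff, Set.mem_Iic, Set.mem_Ioo,
              Set.mem_empty_iff_false, iff_false, not_and]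
            intro h1 h2
            linarith
          rw [hempty, measure_empty]
        have hsub : {θ : V → ℝ | N.d ∈ N.activeSet A Ahat θ (t+1)}
            ⊆ {θ : V → ℝ | N.d ∈ N.activeSet A Ahat θ t} ∪ {θ : V → ℝ | θ N.d ≤ 0} := by
          intro θ hθ
          simp only [Set.mem_setOf_eq, activeSet, Set.mem_union] at hθ
          rcases hθ with h | h
          · exact absurd h hdA
          · obtain ⟨-, hle⟩ := h
            by_cases hd : N.d ∈ N.activeSet A Ahat θ t
            · exact Or.inl hd
            · refine Or.inr ?_
              have hS : ∑ w, (N.activeSet A Ahat θ t).indicator (N.b N.d) w = 0 := by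
                apply Finset.sum_eq_zero
                intro w _
                by_cases hw : w ∈ N.activeSet A Ahat θ t
                · rw [Set.indicator_of_mem hw]
                  apply N.b_d_eq_zero
                  rintro rfl
                  exact hd hw
                · rw [Set.indicator_of_notMem hw]
              rw [hS] at hle
              exact hle
        rw [InfoNetwork.EX]
        have hfin : thresholdMeasure V {θ : V → ℝ | N.d ∈ N.activeSet A Ahat θ (t+1)} = 0 := by
          apply le_antisymm _ zero_le
          calc thresholdMeasure V {θ : V → ℝ | N.d ∈ N.activeSet A Ahat θ (t+1)}
              ≤ thresholdMeasure V ({θ : V → ℝ | N.d ∈ N.activeSet A Ahat θ t}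
                  ∪ {θ : V → ℝ | θ N.d ≤ 0}) := measure_mono hsub
            _ ≤ thresholdMeasure V {θ : V → ℝ | N.d ∈ N.activeSet A Ahat θ t}
                  + thresholdMeasure V {θ : V → ℝ | θ N.d ≤ 0} := measure_union_le _ _
            _ = 0 := by rw [hEt, hzero, add_zero]
        rw [hfin, ENNReal.toReal_zero]
      · -- main case
        rw [N.EX_succ hacyc A Ahat hvd hvA t]
        rw [indicator_sum_pow_succ]
        apply Finset.sum_congr rfl
        intro u _
        rw [ih u]
        congr 1
        simp [absorbing, hvA]

end MainProof

/-- in an acyclic network with disjoint transient and permanent initial sets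
`A` and `Ahat`, for a non-void node `v` and a time `1 ≤ t ≤ T`,
`E[X^t_v(A,Ahat)] = ∑_{u ∈ A ∪ Ahat} (M_Ahat^t) v u`: the probability that `v` is active at
time `t` equals the probability that a random walk with transition matrix `b` started at `v`
either visits `Ahat` at some time `≤ t`, or is in `A` at time `t`. -/
theorem EX_eq_absorbing_walk {V : Type*} [Fintype V] [DecidableEq V] (N : InfoNetwork V)
    (hacyc : N.Acyclic) (A Ahat : Set V)
    (hA : A ⊆ {x : V | x ≠ N.d}) (hAhat : Ahat ⊆ {x : V | x ≠ N.d})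
    (hdisj : Disjoint A Ahat)
    (T : ℕ) (t : ℕ) (ht1 : 1 ≤ t) (htT : t ≤ T) (v : V) (hv : v ≠ N.d) :
    N.EX A Ahat t v = ∑ u : V, (A ∪ Ahat).indicator ((absorbing N Ahat ^ t) v) u := by
  exact EX_eq_indicator_sum N hacyc A Ahat hA hAhat t v
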